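/- Let C be a category with pullbacks, x : P ⟶ X and g : Y ⟶ X morphisms, and let Q := P ×_X Y be the pullback of x and g, with second projection pr : Q ⟶ Y. Then there is an isomorphism of simplicial objects in C between the Čech nerve of pr : Q ⟶ Y and the simplicial object whose n-th object is the pullback of the augmentation Č_n(x) ⟶ X along g, with simplicial operators induced from those of the Čech nerve of x; in particular, for every n, Č_n(pr) ≅ Č_n(x) ×_X Y compatibly with all face and degeneracy maps. (Lemma 'Monodromy'(ii): the Čech nerve of the fiber x*(Y) → Y is the base change along g of the Čech nerve of x.) -/

import Mathlib

open CategoryTheory CategoryTheory.Limits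

noncomputable section

universe v u

variable {C : Type u} [Category.{v} C]

@[simps]
def baseChangeFunctor [HasPullbacks C] {J : Type*} [Category J] {X Y : C} (g : Y ⟶ X)
    (A : J ⥤ C) (ε : A ⟶ (Functor.const J).obj X) : J ⥤ C where
  obj j := pullback (ε.app j) g
  map φ :=
    pullback.map _ _ _ _ (A.map φ) (𝟙 Y) (𝟙 X)
      (by simp [(ε.naturality φ).symm]) (by simp)
  map_id j := by apply pullback.hom_ext <;> simp
  map_comp φ ψ := by apply pullback.hom_ext <;> simp [pullback.map_comp]

theorem cechNerve_baseChange [HasFiniteWidePullbacks C] {P X Y : C} (x : P ⟶ X) (g : Y ⟶ X) :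
    Nonempty
      ((Arrow.mk (pullback.snd x g)).cechNerve ≅
        baseChangeFunctor g (Arrow.mk x).cechNerve (Arrow.mk x).augmentedCechNerve.hom) := by
  have : HasPullbacks C := inferInstance
  show Nonempty (_ ≅ (
    { obj := fun n => pullback (WidePullback.base (J := Fin (n.unop.len + 1)) (fun _ => x)) g
      map := fun φ => pullback.map _ _ _ _ ((Arrow.mk x).cechNerve.map φ) (𝟙 Y) (𝟙 X)
        (by simp [WidePullback.lift_base]) (by simp)
      map_id := (baseChangeFunctor g (Arrow.mk x).cechNerve (Arrow.mk x).augmentedCechNerve.hom).map_id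
      map_comp := (baseChangeFunctor g (Arrow.mk x).cechNerve (Arrow.mk x).augmentedCechNerve.hom).map_comp }
      : SimplexCategoryᵒᵖ ⥤ C))
  refine ⟨NatIso.ofComponents (fun n => ?_) ?_⟩
  · refine ⟨pullback.lift
        (WidePullback.lift (WidePullback.base _ ≫ g)
          (fun i => WidePullback.π _ i ≫ pullback.fst x g)
          (fun i => by simp [pullback.condition, ← WidePullback.π_arrow]))
        (WidePullback.base _) (by simp [WidePullback.lift_π, WidePullback.lift_base, WidePullback.lift_π_assoc, WidePullback.lift_base_assoc, pullback.lift_fst, pullback.lift_snd, pullback.lift_fst_assoc, pullback.lift_snd_assoc, Arrow.augmentedCechNerve, Arrow.cechNerve]),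
      WidePullback.lift (pullback.snd _ _)
        (fun i => pullback.lift (pullback.fst _ _ ≫ WidePullback.π _ i) (pullback.snd _ _)
          (by simp [← pullback.condition, WidePullback.π_arrow, WidePullback.lift_π, WidePullback.lift_base, WidePullback.lift_π_assoc, WidePullback.lift_base_assoc, pullback.lift_fst, pullback.lift_snd, pullback.lift_fst_assoc, pullback.lift_snd_assoc, Arrow.augmentedCechNerve, Arrow.cechNerve]))
        (fun i => by simp [WidePullback.lift_π, WidePullback.lift_base, WidePullback.lift_π_assoc, WidePullback.lift_base_assoc, pullback.lift_fst, pullback.lift_snd, pullback.lift_fst_assoc, pullback.lift_snd_assoc, Arrow.augmentedCechNerve, Arrow.cechNerve]), ?_, ?_⟩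
    · apply WidePullback.hom_ext
      · intro i
        apply pullback.hom_ext <;> simp [WidePullback.lift_π, WidePullback.lift_base, WidePullback.lift_π_assoc, WidePullback.lift_base_assoc, pullback.lift_fst, pullback.lift_snd, pullback.lift_fst_assoc, pullback.lift_snd_assoc, Arrow.augmentedCechNerve, Arrow.cechNerve]
      · simp [WidePullback.lift_π, WidePullback.lift_base, WidePullback.lift_π_assoc, WidePullback.lift_base_assoc, pullback.lift_fst, pullback.lift_snd, pullback.lift_fst_assoc, pullback.lift_snd_assoc, Arrow.augmentedCechNerve, Arrow.cechNerve]
    · apply pullback.hom_ext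
      · apply WidePullback.hom_ext <;> simp [pullback.condition, WidePullback.lift_π, WidePullback.lift_base, WidePullback.lift_π_assoc, WidePullback.lift_base_assoc, pullback.lift_fst, pullback.lift_snd, pullback.lift_fst_assoc, pullback.lift_snd_assoc, Arrow.augmentedCechNerve, Arrow.cechNerve]
      · simp [WidePullback.lift_π, WidePullback.lift_base, WidePullback.lift_π_assoc, WidePullback.lift_base_assoc, pullback.lift_fst, pullback.lift_snd, pullback.lift_fst_assoc, pullback.lift_snd_assoc, Arrow.augmentedCechNerve, Arrow.cechNerve]
  · intro m n φ
    apply pullback.hom_ext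
    · apply WidePullback.hom_ext
      · intro i
        simp [WidePullback.lift_π, WidePullback.lift_base, WidePullback.lift_π_assoc, WidePullback.lift_base_assoc, pullback.lift_fst, pullback.lift_snd, pullback.lift_fst_assoc, pullback.lift_snd_assoc, Arrow.augmentedCechNerve, Arrow.cechNerve]
      · simp [WidePullback.lift_π, WidePullback.lift_base, WidePullback.lift_π_assoc, WidePullback.lift_base_assoc, pullback.lift_fst, pullback.lift_snd, pullback.lift_fst_assoc, pullback.lift_snd_assoc, Arrow.augmentedCechNerve, Arrow.cechNerve]
    · simp [WidePullback.lift_π, WidePullback.lift_base, WidePullback.lift_π_assoc, WidePullback.lift_base_assoc, pullback.lift_fst, pullback.lift_snd, pullback.lift_fst_assoc, pullback.lift_snd_assoc, Arrow.augmentedCechNerve, Arrow.cechNerve]
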